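/- Define E(a,b,c) = Σ_{k=0}^{a+b-c} C(a,k)·C(b,c-a+k)·C(c,b-k) when c = max(a,b,c) (extended symmetrically to all arguments, and E = 0 when the triangle inequality fails). Then 2(a-b)·E(a,b,c) + (a-b+c+1)·E(a+1,b,c) + (a-b-c-1)·E(a,b+1,c) = 0 for all natural numbers a, b, c. -/

import Mathlib

open Finset

/-- Binomial coefficient with integer lower index, zero on negatives. -/
def chZ (n : ℕ) (j : ℤ) : ℤ := if 0 ≤ j then (n.choose j.toNat : ℤ) else 0

lemma chZ_neg {n : ℕ} {j : ℤ} (h : j < 0) : chZ n j = 0 := by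
  simp [chZ, not_le.mpr h]

lemma chZ_big {n : ℕ} {j : ℤ} (h : (n : ℤ) < j) : chZ n j = 0 := by
  unfold chZ
  split_ifs with h0
  · have : n < j.toNat := by omega
    simp [Nat.choose_eq_zero_of_lt this]
  · rfl

lemma chZ_cast (n m : ℕ) : chZ n (m : ℤ) = (n.choose m : ℤ) := by
  simp [chZ]

lemma chZ_eq_cast (n : ℕ) {j : ℤ} {m : ℕ} (h : j = (m : ℤ)) :
    chZ n j = (n.choose m : ℤ) := by rw [h, chZ_cast]

lemma chZ_congr (n : ℕ) {x y : ℤ} (h : x = y) : chZ n x = chZ n y := by rw [h]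

lemma chZ_symm (n : ℕ) (j : ℤ) : chZ n ((n : ℤ) - j) = chZ n j := by
  rcases lt_or_ge j 0 with hj | hj
  · rw [chZ_neg hj, chZ_big (by omega)]
  rcases le_or_gt j (n : ℤ) with hjn | hjn
  · have h1 : (n : ℤ) - j = ((n - j.toNat : ℕ) : ℤ) := by omega
    rw [h1, chZ_cast]
    simp only [chZ, if_pos hj]
    rw [Nat.choose_symm (by omega)]
  · rw [chZ_neg (by omega), chZ_big hjn]

lemma chZ_abs (n : ℕ) (x : ℤ) :
    (x + 1) * chZ n (x + 1) = ((n : ℤ) - x) * chZ n x := by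
  rcases lt_or_ge x 0 with hx | hx
  · rcases eq_or_lt_of_le (by omega : x + 1 ≤ 0) with h | h
    · rw [chZ_neg (show x < 0 by omega)]
      rw [show x + 1 = 0 from h]
      ring
    · rw [chZ_neg h, chZ_neg (show x < 0 by omega)]
      ring
  · obtain ⟨m, rfl⟩ : ∃ m : ℕ, x = (m : ℤ) := ⟨x.toNat, by omega⟩
    rw [show (m : ℤ) + 1 = ((m + 1 : ℕ) : ℤ) by push_cast; ring, chZ_cast, chZ_cast]
    rcases le_or_gt (m + 1) n with h | h
    · have := Nat.choose_succ_right_eq n m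
      have hc : ((n - m : ℕ) : ℤ) = (n : ℤ) - m := by omega
      have := congrArg (fun t : ℕ => (t : ℤ)) this
      push_cast at this
      rw [hc] at this
      push_cast
      linarith [this]
    · rcases eq_or_lt_of_le (by omega : n ≤ m) with h2 | h2
      · rw [Nat.choose_eq_zero_of_lt (by omega), ← h2]
        simp
      · rw [Nat.choose_eq_zero_of_lt (by omega), Nat.choose_eq_zero_of_lt h2]
        ring

lemma chZ_abs' (n : ℕ) (j : ℤ) :
    j * chZ n j = ((n : ℤ) + 1 - j) * chZ n (j - 1) := by
  have h := chZ_abs n (j - 1)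
  rw [show j - 1 + 1 = j by ring] at h
  linear_combination h

lemma chZ_pascal (n : ℕ) (j : ℤ) : chZ (n + 1) j = chZ n (j - 1) + chZ n j := by
  rcases lt_or_ge j 0 with hj | hj
  · rw [chZ_neg hj, chZ_neg hj, chZ_neg (by omega)]; ring
  rcases eq_or_lt_of_le hj with h0 | h0
  · subst h0
    rw [show chZ n (0 - 1) = 0 from chZ_neg (by norm_num)]
    simp [chZ]
  · obtain ⟨m, rfl⟩ : ∃ m : ℕ, j = ((m + 1 : ℕ) : ℤ) := ⟨(j - 1).toNat, by omega⟩
    rw [chZ_cast, chZ_cast, show ((m + 1 : ℕ) : ℤ) - 1 = (m : ℤ) by push_cast; ring,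
      chZ_cast, Nat.choose_succ_succ]
    push_cast; ring

/-- Uniform (fully symmetric) version of the block-derangement sum. -/
def Fs (a b c : ℕ) : ℤ :=
  ∑ k ∈ Finset.range (a + b + 2),
    chZ a (k : ℤ) * chZ b ((c : ℤ) + k - a) * chZ c ((b : ℤ) - k)

lemma sum_trim (g : ℕ → ℤ) {m N : ℕ} (h : m ≤ N) (hz : ∀ j, m ≤ j → g j = 0) :
    ∑ k ∈ Finset.range N, g k = ∑ k ∈ Finset.range m, g k := by
  induction N, h using Nat.le_induction with
  | base => rfl
  | succ n hn ih => rw [Finset.sum_range_succ, ih, hz n hn, add_zero]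

lemma g_reflect23 (a b c : ℕ) (j : ℤ) :
    chZ a ((a : ℤ) - j) * chZ b ((c : ℤ) + ((a : ℤ) - j) - a) *
      chZ c ((b : ℤ) - ((a : ℤ) - j))
      = chZ a j * chZ c ((b : ℤ) + j - a) * chZ b ((c : ℤ) - j) := by
  rw [chZ_symm a j]
  rw [chZ_congr b (show (c : ℤ) + ((a : ℤ) - j) - a = (c : ℤ) - j by ring)]
  rw [chZ_congr c (show (b : ℤ) - ((a : ℤ) - j) = (b : ℤ) + j - a by ring)]
  ring

lemma Fs_swap23 (a b c : ℕ) : Fs a c b = Fs a b c := by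
  unfold Fs
  have hL : ∑ k ∈ Finset.range (a + c + 2),
      chZ a (k : ℤ) * chZ c ((b : ℤ) + k - a) * chZ b ((c : ℤ) - k)
      = ∑ k ∈ Finset.range (a + 1),
      chZ a (k : ℤ) * chZ c ((b : ℤ) + k - a) * chZ b ((c : ℤ) - k) := by
    apply sum_trim _ (by omega)
    intro j hj
    rw [chZ_big (show (a : ℤ) < (j : ℤ) by omega)]
    ring
  have hR : ∑ k ∈ Finset.range (a + b + 2),
      chZ a (k : ℤ) * chZ b ((c : ℤ) + k - a) * chZ c ((b : ℤ) - k)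
      = ∑ k ∈ Finset.range (a + 1),
      chZ a (k : ℤ) * chZ b ((c : ℤ) + k - a) * chZ c ((b : ℤ) - k) := by
    apply sum_trim _ (by omega)
    intro j hj
    rw [chZ_big (show (a : ℤ) < (j : ℤ) by omega)]
    ring
  rw [hL, hR]
  rw [← Finset.sum_range_reflect
    (fun k : ℕ => chZ a (k : ℤ) * chZ b ((c : ℤ) + k - a) * chZ c ((b : ℤ) - k)) (a + 1)]
  apply Finset.sum_congr rfl
  intro k hk
  simp only [Finset.mem_range] at hk
  rw [show ((a + 1 - 1 - k : ℕ) : ℤ) = (a : ℤ) - k by omega]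
  exact (g_reflect23 a b c k).symm

lemma g_reflect12 (a b c : ℕ) (j : ℤ) :
    chZ a ((a : ℤ) + b - c - j) * chZ b ((c : ℤ) + ((a : ℤ) + b - c - j) - a) *
      chZ c ((b : ℤ) - ((a : ℤ) + b - c - j))
      = chZ b j * chZ a ((c : ℤ) + j - b) * chZ c ((a : ℤ) - j) := by
  rw [chZ_congr a (show (a : ℤ) + b - c - j = (a : ℤ) - ((c : ℤ) + j - b) by ring)]
  rw [chZ_symm a ((c : ℤ) + j - b)]
  rw [chZ_congr b (show (c : ℤ) + ((a : ℤ) + b - c - j) - a = (b : ℤ) - j by ring)]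
  rw [chZ_symm b j]
  rw [chZ_congr c (show (b : ℤ) - ((a : ℤ) + b - c - j) = (c : ℤ) - ((a : ℤ) - j) by ring)]
  rw [chZ_symm c ((a : ℤ) - j)]
  ring

lemma Fs_swap12 (a b c : ℕ) : Fs b a c = Fs a b c := by
  unfold Fs
  rcases le_or_gt c (a + b) with hc | hc
  · have hL : ∑ k ∈ Finset.range (b + a + 2),
        chZ b (k : ℤ) * chZ a ((c : ℤ) + k - b) * chZ c ((a : ℤ) - k)
        = ∑ k ∈ Finset.range (a + b - c + 1),
        chZ b (k : ℤ) * chZ a ((c : ℤ) + k - b) * chZ c ((a : ℤ) - k) := by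
      apply sum_trim _ (by omega)
      intro j hj
      rw [chZ_big (show (a : ℤ) < (c : ℤ) + j - b by omega)]
      ring
    have hR : ∑ k ∈ Finset.range (a + b + 2),
        chZ a (k : ℤ) * chZ b ((c : ℤ) + k - a) * chZ c ((b : ℤ) - k)
        = ∑ k ∈ Finset.range (a + b - c + 1),
        chZ a (k : ℤ) * chZ b ((c : ℤ) + k - a) * chZ c ((b : ℤ) - k) := by
      apply sum_trim _ (by omega)
      intro j hj
      rw [chZ_big (show (b : ℤ) < (c : ℤ) + j - a by omega)]
      ring
    rw [hL, hR]
    rw [← Finset.sum_range_reflect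
      (fun k : ℕ => chZ a (k : ℤ) * chZ b ((c : ℤ) + k - a) * chZ c ((b : ℤ) - k))
      (a + b - c + 1)]
    apply Finset.sum_congr rfl
    intro k hk
    simp only [Finset.mem_range] at hk
    rw [show ((a + b - c + 1 - 1 - k : ℕ) : ℤ) = (a : ℤ) + b - c - k by omega]
    exact (g_reflect12 a b c k).symm
  · rw [Finset.sum_eq_zero, Finset.sum_eq_zero]
    · intro k _
      rw [chZ_big (show (b : ℤ) < (c : ℤ) + k - a by omega)]
      ring
    · intro k _
      rw [chZ_big (show (a : ℤ) < (c : ℤ) + k - b by omega)]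
      ring

/-- The binomial sum for block derangements of three players,
when the third argument is the largest. The sum is automatically `0`
when the triangle inequality `c ≤ a + b` fails. -/
def Eaux (a b c : ℕ) : ℤ :=
  ∑ k ∈ Finset.range (a + b - c + 1),
    (a.choose k : ℤ) * (b.choose (c - a + k)) * (c.choose (b - k))

/-- The block derangement number `E(a,b,c)`: the binomial sum applied with the
largest argument placed last. -/
def E3 (a b c : ℕ) : ℤ :=
  if a ≤ c ∧ b ≤ c then Eaux a b c
  else if a ≤ b ∧ c ≤ b then Eaux a c b
  else Eaux b c a

lemma Fs_eq_Eaux (a b c : ℕ) (ha : a ≤ c) (hb : b ≤ c) : Fs a b c = Eaux a b c := by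
  unfold Fs Eaux
  rw [sum_trim _ (show a + b - c + 1 ≤ a + b + 2 by omega)]
  · apply Finset.sum_congr rfl
    intro k hk
    simp only [Finset.mem_range] at hk
    rw [chZ_cast, chZ_eq_cast b (show (c : ℤ) + k - a = ((c - a + k : ℕ) : ℤ) by omega),
      chZ_eq_cast c (show (b : ℤ) - k = ((b - k : ℕ) : ℤ) by omega)]
  · intro j hj
    rw [chZ_big (show (b : ℤ) < (c : ℤ) + j - a by omega)]
    ring

lemma E3_eq_Fs (a b c : ℕ) : E3 a b c = Fs a b c := by
  unfold E3
  split_ifs with h1 h2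
  · exact (Fs_eq_Eaux a b c h1.1 h1.2).symm
  · rw [← Fs_eq_Eaux a c b h2.1 h2.2, Fs_swap23]
  · push_neg at h1 h2
    have hba : b ≤ a := by omega
    have hca : c ≤ a := by omega
    rw [← Fs_eq_Eaux b c a hba hca, Fs_swap23, Fs_swap12]

lemma Fs_rec (a b c : ℕ) :
    2 * ((a : ℤ) - b) * Fs a b c + ((a : ℤ) - b + c + 1) * Fs (a + 1) b c +
      ((a : ℤ) - b - c - 1) * Fs a (b + 1) c = 0 := by
  have hN : Fs a b c = ∑ k ∈ Finset.range (a + b + 3),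
      chZ a (k : ℤ) * chZ b ((c : ℤ) + k - a) * chZ c ((b : ℤ) - k) := by
    unfold Fs
    rw [sum_trim _ (show a + b + 2 ≤ a + b + 3 by omega)]
    intro j hj
    rw [chZ_big (show (a : ℤ) < (j : ℤ) by omega)]
    ring
  have h1 : Fs (a + 1) b c = ∑ k ∈ Finset.range (a + b + 3),
      chZ (a + 1) (k : ℤ) * chZ b ((c : ℤ) + k - a - 1) * chZ c ((b : ℤ) - k) := by
    unfold Fs
    rw [show a + 1 + b + 2 = a + b + 3 by omega]
    apply Finset.sum_congr rfl
    intro k _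
    rw [chZ_congr b (show (c : ℤ) + k - (a + 1 : ℕ) = (c : ℤ) + k - a - 1 by push_cast; ring)]
  have h2 : Fs a (b + 1) c = ∑ k ∈ Finset.range (a + b + 3),
      chZ a (k : ℤ) * chZ (b + 1) ((c : ℤ) + k - a) * chZ c ((b : ℤ) - k + 1) := by
    unfold Fs
    rw [show a + (b + 1) + 2 = a + b + 3 by omega]
    apply Finset.sum_congr rfl
    intro k _
    rw [chZ_congr c (show ((b + 1 : ℕ) : ℤ) - k = (b : ℤ) - k + 1 by push_cast; ring)]
  rw [hN, h1, h2, Finset.mul_sum, Finset.mul_sum, Finset.mul_sum,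
    ← Finset.sum_add_distrib, ← Finset.sum_add_distrib]
  set f : ℕ → ℤ := fun k =>
    ((a : ℤ) - b) * (chZ a ((k : ℤ) - 1) * chZ b ((c : ℤ) + k - a - 1) *
      chZ c ((b : ℤ) - k + 1)) with hf
  have key : ∀ k ∈ Finset.range (a + b + 3),
      2 * ((a : ℤ) - b) * (chZ a (k : ℤ) * chZ b ((c : ℤ) + k - a) * chZ c ((b : ℤ) - k)) +
        ((a : ℤ) - b + c + 1) *
          (chZ (a + 1) (k : ℤ) * chZ b ((c : ℤ) + k - a - 1) * chZ c ((b : ℤ) - k)) +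
        ((a : ℤ) - b - c - 1) *
          (chZ a (k : ℤ) * chZ (b + 1) ((c : ℤ) + k - a) * chZ c ((b : ℤ) - k + 1))
      = f (k + 1) - f k := by
    intro k _
    simp only [hf]
    rw [chZ_congr a (show ((k + 1 : ℕ) : ℤ) - 1 = (k : ℤ) by push_cast; ring),
      chZ_congr b (show (c : ℤ) + ((k + 1 : ℕ) : ℤ) - a - 1 = (c : ℤ) + k - a by push_cast; ring),
      chZ_congr c (show (b : ℤ) - ((k + 1 : ℕ) : ℤ) + 1 = (b : ℤ) - k by push_cast; ring)]
    rw [chZ_pascal a (k : ℤ), chZ_pascal b ((c : ℤ) + k - a)]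
    have habs1 := chZ_abs' a (k : ℤ)
    have habs2 := chZ_abs' b ((c : ℤ) + k - a)
    have habs3 := chZ_abs c ((b : ℤ) - k)
    linear_combination
      (-(chZ b ((c : ℤ) + k - a - 1) * chZ c ((b : ℤ) - k))
        - chZ b ((c : ℤ) + k - a - 1) * chZ c ((b : ℤ) - k + 1)) * habs1 +
      (-(chZ a (k : ℤ) * chZ c ((b : ℤ) - k))
        - chZ a (k : ℤ) * chZ c ((b : ℤ) - k + 1)) * habs2 +
      (-2 * (chZ a (k : ℤ) * chZ b ((c : ℤ) + k - a - 1))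
        - chZ a (k : ℤ) * chZ b ((c : ℤ) + k - a)
        - chZ a ((k : ℤ) - 1) * chZ b ((c : ℤ) + k - a - 1)) * habs3
  rw [Finset.sum_congr rfl key, Finset.sum_range_sub f (a + b + 3)]
  have hf0 : f 0 = 0 := by
    simp only [hf, Nat.cast_zero]
    rw [chZ_neg (show (0 : ℤ) - 1 < 0 by norm_num)]
    ring
  have hfN : f (a + b + 3) = 0 := by
    simp only [hf]
    rw [chZ_big (show (a : ℤ) < ((a + b + 3 : ℕ) : ℤ) - 1 by push_cast; omega)]
    ring
  rw [hf0, hfN]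
  ring

theorem stmt9 (a b c : ℕ) :
    2 * ((a : ℤ) - b) * E3 a b c + ((a : ℤ) - b + c + 1) * E3 (a + 1) b c +
      ((a : ℤ) - b - c - 1) * E3 a (b + 1) c = 0 := by
  rw [E3_eq_Fs, E3_eq_Fs, E3_eq_Fs]
  exact Fs_rec a b c
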